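/- arXiv:2310.16350 — 3 statements merged into one kernel-verified Lean document; each statement's English description precedes it below -/
import Mathlib

section
/- Let (X, Y) be centered jointly Gaussian real random variables with Var(X) = Var(Y) = σ² > 0 and correlation cos(α) for some α ∈ [0, π]. Then E[max(X,0) · max(Y,0)] = (σ²/(2π)) · (sin α + (π − α) cos α). -/
/-!
STATEMENT 0: The order-one arc-cosine kernel expectation. If `(X, Y)` is a centered
jointly Gaussian pair with `Var X = Var Y = σ² > 0` and correlation `cos α`,
`α ∈ [0, π]`, then `E[φ(X) φ(Y)] = (σ²/(2π)) (sin α + (π − α) cos α)`, where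
`φ(z) = max(z, 0)` is the ReLU function.

The joint Gaussian law is specified exactly: the joint distribution of `(X, Y)` is the
pushforward of the standard Gaussian product measure on `ℝ × ℝ` under
`(z₁, z₂) ↦ (σ z₁, σ (cos α · z₁ + sin α · z₂))`, which is precisely the centered
bivariate Gaussian with both variances `σ²` and correlation `cos α`.
-/

open MeasureTheory ProbabilityTheory Real

section Helpers

open Set Filter

lemma arccos_radial_int : ∫ r in Set.Ioi (0:ℝ), r ^ 3 * Real.exp (-(r^2)/2) = 2 := by
  have hderiv : ∀ r ∈ Set.Ici (0:ℝ),
      HasDerivAt (fun r : ℝ => -(r^2+2) * Real.exp (-(r^2)/2)) (r ^ 3 * Real.exp (-(r^2)/2)) r := by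
    intro r _
    have h1 : HasDerivAt (fun r : ℝ => -(r^2)/2) (-r) r := by
      have := ((hasDerivAt_pow 2 r).neg).div_const 2
      simpa using this.congr_deriv (by ring)
    have h2 : HasDerivAt (fun r : ℝ => Real.exp (-(r^2)/2)) (Real.exp (-(r^2)/2) * (-r)) r :=
      (Real.hasDerivAt_exp _).comp r h1
    have h3 : HasDerivAt (fun r : ℝ => -(r^2+2)) (-(2*r)) r := by
      have := ((hasDerivAt_pow 2 r).add_const 2).neg
      exact this.congr_deriv (by push_cast; ring)
    have := h3.mul h2
    exact this.congr_deriv (by ring)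
  have hint : IntegrableOn (fun r : ℝ => r ^ 3 * Real.exp (-(r^2)/2)) (Set.Ioi 0) := by
    have := (integrable_rpow_mul_exp_neg_mul_sq (b := (1:ℝ)/2) (by norm_num) (s := 3) (by norm_num))
    refine (this.integrableOn.mono_set (Set.subset_univ _)).congr_fun ?_ measurableSet_Ioi
    intro x hx
    have h3 : x ^ ((3:ℕ):ℝ) = x ^ (3:ℕ) := Real.rpow_natCast x 3
    push_cast at h3
    simp only [h3]
    ring
  have htend : Tendsto (fun r : ℝ => -(r^2+2) * Real.exp (-(r^2)/2)) atTop (nhds 0) := by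
    have h1 : Tendsto (fun u : ℝ => -((2*u+2) * Real.exp (-u))) atTop (nhds 0) := by
      have ha : Tendsto (fun u : ℝ => u * Real.exp (-u)) atTop (nhds 0) := by
        simpa using Real.tendsto_pow_mul_exp_neg_atTop_nhds_zero 1
      have hb : Tendsto (fun u : ℝ => Real.exp (-u)) atTop (nhds 0) :=
        Real.tendsto_exp_neg_atTop_nhds_zero
      have := ((ha.const_mul 2).add (hb.const_mul 2)).neg
      simpa using this.congr (fun u => by ring)
    have h2 : Tendsto (fun r : ℝ => r^2/2) atTop atTop := by
      apply Tendsto.atTop_div_const (by norm_num)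
      exact tendsto_pow_atTop (by norm_num)
    have := h1.comp h2
    refine this.congr (fun r => ?_)
    simp only [Function.comp]
    rw [neg_div]
    ring_nf
  have := integral_Ioi_of_hasDerivAt_of_tendsto' hderiv hint htend
  rw [this]
  norm_num

lemma arccos_cos_prod_identity (α θ : ℝ) :
    Real.cos θ * Real.cos (θ - α) = Real.cos α / 2 + Real.cos (2*θ - α) / 2 := by
  have h1 : Real.cos (2*θ - α) = Real.cos (2*θ) * Real.cos α + Real.sin (2*θ) * Real.sin α :=
    Real.cos_sub _ _
  have h2 : Real.cos (θ - α) = Real.cos θ * Real.cos α + Real.sin θ * Real.sin α :=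
    Real.cos_sub _ _
  have h3 := Real.cos_two_mul θ
  have h4 := Real.sin_two_mul θ
  rw [h1, h2, h3, h4]
  ring

lemma arccos_angular_fct (α : ℝ) :
    ∫ θ in (α - π/2)..(π/2), Real.cos θ * Real.cos (θ - α)
      = (Real.sin α + (π - α) * Real.cos α) / 2 := by
  have hderiv : ∀ θ ∈ Set.uIcc (α - π/2) (π/2),
      HasDerivAt (fun θ : ℝ => θ * Real.cos α / 2 + Real.sin (2*θ - α) / 4)
        (Real.cos θ * Real.cos (θ - α)) θ := by
    intro θ _
    have h1 : HasDerivAt (fun θ : ℝ => θ * Real.cos α / 2) (Real.cos α / 2) θ := by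
      simpa using ((hasDerivAt_id θ).mul_const (Real.cos α)).div_const 2
    have h2 : HasDerivAt (fun θ : ℝ => 2*θ - α) 2 θ := by
      simpa using ((hasDerivAt_id θ).const_mul 2).sub_const α
    have h3 : HasDerivAt (fun θ : ℝ => Real.sin (2*θ - α) / 4)
        (Real.cos (2*θ - α) * 2 / 4) θ :=
      ((Real.hasDerivAt_sin _).comp θ h2).div_const 4
    have := h1.add h3
    exact this.congr_deriv (by rw [arccos_cos_prod_identity α θ]; ring)
  have hcont : IntervalIntegrable (fun θ => Real.cos θ * Real.cos (θ - α))
      volume (α - π/2) (π/2) := by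
    apply Continuous.intervalIntegrable
    exact Real.continuous_cos.mul (Real.continuous_cos.comp (continuous_id.sub continuous_const))
  rw [intervalIntegral.integral_eq_sub_of_hasDerivAt hderiv hcont]
  have e1 : Real.sin (2*(π/2) - α) = Real.sin α := by
    rw [show 2*(π/2) - α = π - α by ring, Real.sin_pi_sub]
  have e2 : Real.sin (2*(α - π/2) - α) = -Real.sin α := by
    rw [show 2*(α - π/2) - α = -(π - α) by ring, Real.sin_neg, Real.sin_pi_sub]
  rw [e1, e2]
  ring

lemma arccos_angular_int (α : ℝ) (hα : α ∈ Set.Icc 0 π) :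
    ∫ θ in Set.Ioo (-π) π, max (Real.cos θ) 0 * max (Real.cos (θ - α)) 0
      = (Real.sin α + (π - α) * Real.cos α) / 2 := by
  obtain ⟨hα0, hαπ⟩ := hα
  have hpi := Real.pi_pos
  have hsub : Set.Ioo (α - π/2) (π/2) ⊆ Set.Ioo (-π) π := by
    intro x hx
    constructor
    · linarith [hx.1]
    · linarith [hx.2]
  have hcong : ∀ θ ∈ Set.Ioo (-π) π,
      max (Real.cos θ) 0 * max (Real.cos (θ - α)) 0
        = Set.indicator (Set.Ioo (α - π/2) (π/2)) (fun θ => Real.cos θ * Real.cos (θ - α)) θ := by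
    intro θ hθ
    by_cases hmem : θ ∈ Set.Ioo (α - π/2) (π/2)
    · rw [Set.indicator_of_mem hmem]
      have hc1 : 0 ≤ Real.cos θ := by
        apply Real.cos_nonneg_of_mem_Icc
        constructor
        · linarith [hmem.1]
        · linarith [hmem.2]
      have hc2 : 0 ≤ Real.cos (θ - α) := by
        apply Real.cos_nonneg_of_mem_Icc
        constructor
        · linarith [hmem.1]
        · linarith [hmem.2]
      rw [max_eq_left hc1, max_eq_left hc2]
    · rw [Set.indicator_of_notMem hmem]
      rw [Set.mem_Ioo, not_and_or, not_lt, not_lt] at hmem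
      rcases hmem with h | h
      · by_cases h2 : α - θ ≤ π + π/2
        · have : Real.cos (θ - α) ≤ 0 := by
            rw [← Real.cos_neg, neg_sub]
            exact Real.cos_nonpos_of_pi_div_two_le_of_le (by linarith) h2
          rw [max_eq_right this]
          ring
        · have : Real.cos θ ≤ 0 := by
            rw [← Real.cos_neg]
            exact Real.cos_nonpos_of_pi_div_two_le_of_le (by linarith) (by linarith [hθ.1])
          rw [max_eq_right this]
          ring
      · have : Real.cos θ ≤ 0 :=
          Real.cos_nonpos_of_pi_div_two_le_of_le h (by linarith [hθ.2])
        rw [max_eq_right this]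
        ring
  rw [setIntegral_congr_fun measurableSet_Ioo hcong]
  rw [setIntegral_indicator measurableSet_Ioo]
  rw [Set.inter_eq_right.mpr hsub]
  rw [← MeasureTheory.integral_Ioc_eq_integral_Ioo,
      ← intervalIntegral.integral_of_le (by linarith)]
  exact arccos_angular_fct α

noncomputable def arccosWfn (x : ℝ) : NNReal := (gaussianPDFReal 0 1 x).toNNReal

lemma arccosWfn_meas : Measurable arccosWfn := (measurable_gaussianPDFReal 0 1).real_toNNReal

lemma arccosWfn_coe (x : ℝ) : ((arccosWfn x : NNReal) : ℝ) = gaussianPDFReal 0 1 x :=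
  Real.coe_toNNReal _ (gaussianPDFReal_nonneg 0 1 x)

lemma arccos_gauss_prod_eq : (gaussianReal 0 1).prod (gaussianReal 0 1)
    = (volume.prod volume).withDensity
        (fun z : ℝ × ℝ => ((arccosWfn z.1 * arccosWfn z.2 : NNReal) : ENNReal)) := by
  apply Measure.prod_eq
  intro s t hs ht
  rw [withDensity_apply _ (hs.prod ht), ← Measure.prod_restrict]
  simp_rw [ENNReal.coe_mul]
  rw [lintegral_prod_mul (f := fun x => ((arccosWfn x : NNReal) : ENNReal))
    (g := fun x => ((arccosWfn x : NNReal) : ENNReal))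
    arccosWfn_meas.coe_nnreal_ennreal.aemeasurable arccosWfn_meas.coe_nnreal_ennreal.aemeasurable]
  rw [gaussianReal_apply 0 one_ne_zero s, gaussianReal_apply 0 one_ne_zero t]
  rfl

lemma arccos_gauss2_relu (α : ℝ) (hα : α ∈ Set.Icc 0 π) :
    ∫ z : ℝ × ℝ, max z.1 0 * max (Real.cos α * z.1 + Real.sin α * z.2) 0
        ∂((gaussianReal 0 1).prod (gaussianReal 0 1))
      = (Real.sin α + (π - α) * Real.cos α) / (2*π) := by
  have hπ := Real.pi_pos
  rw [arccos_gauss_prod_eq,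
    integral_withDensity_eq_integral_smul
      (f := fun z : ℝ × ℝ => arccosWfn z.1 * arccosWfn z.2)
      ((arccosWfn_meas.comp measurable_fst).mul (arccosWfn_meas.comp measurable_snd)) _]
  have hG : (fun z : ℝ × ℝ => (arccosWfn z.1 * arccosWfn z.2 : NNReal)
        • (max z.1 0 * max (Real.cos α * z.1 + Real.sin α * z.2) 0))
      = fun z : ℝ × ℝ => max z.1 0 * max (Real.cos α * z.1 + Real.sin α * z.2) 0
          * ((2*π)⁻¹ * Real.exp (-(z.1^2+z.2^2)/2)) := by
    funext z
    rw [NNReal.smul_def, smul_eq_mul, NNReal.coe_mul, arccosWfn_coe, arccosWfn_coe]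
    unfold gaussianPDFReal
    have h2π : (0:ℝ) ≤ 2*π := by positivity
    have hs : Real.sqrt (2*π) * Real.sqrt (2*π) = 2*π := Real.mul_self_sqrt h2π
    push_cast
    rw [mul_one]
    rw [show (-(z.1^2+z.2^2)/2 : ℝ) = -(z.1-0)^2/(2*1) + -(z.2-0)^2/(2*1) by ring,
      Real.exp_add, show ((2*π)⁻¹ : ℝ) = (√(2*π))⁻¹ * (√(2*π))⁻¹ by rw [← mul_inv, hs]]
    ring
  rw [hG, ← Measure.volume_eq_prod,
    ← integral_comp_polarCoord_symm
      (fun z : ℝ × ℝ => max z.1 0 * max (Real.cos α * z.1 + Real.sin α * z.2) 0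
          * ((2*π)⁻¹ * Real.exp (-(z.1^2+z.2^2)/2)))]
  have htarget : polarCoord.target = Set.Ioi (0:ℝ) ×ˢ Set.Ioo (-π) π := rfl
  rw [htarget]
  rw [setIntegral_congr_fun (measurableSet_Ioi.prod measurableSet_Ioo)
    (g := fun p : ℝ × ℝ => (p.1 ^ 3 * Real.exp (-(p.1^2)/2))
        * ((2*π)⁻¹ * (max (Real.cos p.2) 0 * max (Real.cos (p.2 - α)) 0)))
    ?_]
  · rw [Measure.volume_eq_prod, ← Measure.prod_restrict, integral_prod_mul
      (f := fun r : ℝ => r ^ 3 * Real.exp (-(r^2)/2))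
      (g := fun θ : ℝ => (2*π)⁻¹ * (max (Real.cos θ) 0 * max (Real.cos (θ - α)) 0)),
      arccos_radial_int, MeasureTheory.integral_const_mul, arccos_angular_int α hα]
    field_simp
  · intro p hp
    have hr : 0 < p.1 := hp.1
    simp only [polarCoord_symm_apply]
    simp only [smul_eq_mul]
    have e1 : Real.cos α * (p.1 * Real.cos p.2) + Real.sin α * (p.1 * Real.sin p.2)
        = p.1 * Real.cos (p.2 - α) := by rw [Real.cos_sub]; ring
    have e2 : (p.1 * Real.cos p.2)^2 + (p.1 * Real.sin p.2)^2 = p.1^2 := by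
      have := Real.sin_sq_add_cos_sq p.2
      nlinarith [this]
    rw [e1, e2]
    rw [show max (p.1 * Real.cos p.2) 0 = p.1 * max (Real.cos p.2) 0 by
      rw [mul_max_of_nonneg _ _ hr.le, mul_zero]]
    rw [show max (p.1 * Real.cos (p.2 - α)) 0 = p.1 * max (Real.cos (p.2 - α)) 0 by
      rw [mul_max_of_nonneg _ _ hr.le, mul_zero]]
    ring

end Helpers

theorem stmt_0 {Ω : Type*} [MeasurableSpace Ω] (P : Measure Ω) [IsProbabilityMeasure P]
    (X Y : Ω → ℝ) (σ α : ℝ) (hσ : 0 < σ) (hα : α ∈ Set.Icc 0 π)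
    (hlaw : Measure.map (fun ω => (X ω, Y ω)) P =
      Measure.map
        (fun z : ℝ × ℝ => (σ * z.1, σ * (Real.cos α * z.1 + Real.sin α * z.2)))
        ((gaussianReal 0 1).prod (gaussianReal 0 1))) :
    ∫ ω, max (X ω) 0 * max (Y ω) 0 ∂P =
      σ ^ 2 / (2 * π) * (Real.sin α + (π - α) * Real.cos α) := by
  have hπ := Real.pi_pos
  set T : ℝ × ℝ → ℝ × ℝ :=
    fun z => (σ * z.1, σ * (Real.cos α * z.1 + Real.sin α * z.2)) with hT_def
  have hT : Measurable T := by fun_prop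
  have hF : Continuous (fun p : ℝ × ℝ => max p.1 0 * max p.2 0) :=
    (continuous_fst.max continuous_const).mul (continuous_snd.max continuous_const)
  have hXY : AEMeasurable (fun ω => (X ω, Y ω)) P := by
    by_contra h
    rw [Measure.map_of_not_aemeasurable h] at hlaw
    have hprob : IsProbabilityMeasure
        (Measure.map T ((gaussianReal 0 1).prod (gaussianReal 0 1))) :=
      Measure.isProbabilityMeasure_map hT.aemeasurable
    have h1 : (0 : Measure (ℝ × ℝ)) Set.univ = 1 := by
      rw [hlaw]; exact hprob.measure_univ
    simp at h1
  have step1 : ∫ ω, max (X ω) 0 * max (Y ω) 0 ∂P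
      = ∫ p : ℝ × ℝ, max p.1 0 * max p.2 0 ∂(Measure.map (fun ω => (X ω, Y ω)) P) := by
    rw [integral_map hXY hF.aestronglyMeasurable]
  rw [step1, hlaw, integral_map hT.aemeasurable hF.aestronglyMeasurable]
  have step2 : (fun z : ℝ × ℝ => max (T z).1 0 * max (T z).2 0)
      = fun z : ℝ × ℝ => σ^2 * (max z.1 0 * max (Real.cos α * z.1 + Real.sin α * z.2) 0) := by
    funext z
    simp only [hT_def]
    rw [show max (σ * z.1) 0 = σ * max z.1 0 by rw [mul_max_of_nonneg _ _ hσ.le, mul_zero],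
      show max (σ * (Real.cos α * z.1 + Real.sin α * z.2)) 0
        = σ * max (Real.cos α * z.1 + Real.sin α * z.2) 0 by
          rw [mul_max_of_nonneg _ _ hσ.le, mul_zero]]
    ring
  rw [step2, MeasureTheory.integral_const_mul, arccos_gauss2_relu α hα]
  field_simp
end

section
/- Fix K ≥ 1 and σ > 0, and let w_1, …, w_K, w'_1, …, w'_K be i.i.d. real random variables with distribution N(0, σ²). For 0 ≤ n ≤ K define F(n) = E[φ(Σ_{i=1}^K w_i) · φ(Σ_{i=1}^n w_i + Σ_{i=n+1}^K w'_i)] and H(n) = E[𝔻(Σ_{i=1}^K w_i) · 𝔻(Σ_{i=1}^n w_i + Σ_{i=n+1}^K w'_i)], where φ(z) = max(z, 0) and 𝔻(z) = 1 if z > 0 and 0 otherwise. Then F and H are monotonically nondecreasing: for all integers 0 ≤ n ≤ n' ≤ K, F(n') ≥ F(n) and H(n') ≥ H(n). -/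
/-!
STATEMENT 8: Monotonicity of the CNN infinite-width kernel functions `F` and `H`.

`w_1, …, w_K, w'_1, …, w'_K` are i.i.d. `N(0, σ²)` random variables, realized
canonically on the product space `(Fin K → ℝ) × (Fin K → ℝ)` equipped with the product
of Gaussian product measures. For `0 ≤ n ≤ K`,
`F(n) = E[φ(Σ_{i=1}^K w_i) · φ(Σ_{i=1}^n w_i + Σ_{i=n+1}^K w'_i)]` and
`H(n) = E[𝔻(Σ_{i=1}^K w_i) · 𝔻(Σ_{i=1}^n w_i + Σ_{i=n+1}^K w'_i)]`,
where `φ(z) = max(z,0)` and `𝔻(z) = 1` if `z > 0` and `0` otherwise. Both are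
monotonically nondecreasing in `n`.
-/

open MeasureTheory ProbabilityTheory Real Finset
open scoped NNReal

/-- The product measure on `(Fin K → ℝ) × (Fin K → ℝ)` whose `2K` real coordinates are
i.i.d. centered Gaussians with variance `v`. -/
noncomputable def gaussPair (K : ℕ) (v : ℝ≥0) :
    Measure ((Fin K → ℝ) × (Fin K → ℝ)) :=
  (Measure.pi fun _ : Fin K => gaussianReal 0 v).prod
    (Measure.pi fun _ : Fin K => gaussianReal 0 v)

/-- `Σ_{i=1}^n w_i + Σ_{i=n+1}^K w'_i`. -/
noncomputable def mixSum {K : ℕ} (n : ℕ) (p : (Fin K → ℝ) × (Fin K → ℝ)) : ℝ :=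
  ∑ i : Fin K, if (i : ℕ) < n then p.1 i else p.2 i

/-- `F(n) = E[φ(Σ_{i=1}^K w_i) · φ(Σ_{i=1}^n w_i + Σ_{i=n+1}^K w'_i)]` with
`φ(z) = max(z,0)` the ReLU function. -/
noncomputable def Fker (K : ℕ) (v : ℝ≥0) (n : ℕ) : ℝ :=
  ∫ p, max (∑ i : Fin K, p.1 i) 0 * max (mixSum n p) 0 ∂(gaussPair K v)

/-- `H(n) = E[𝔻(Σ_{i=1}^K w_i) · 𝔻(Σ_{i=1}^n w_i + Σ_{i=n+1}^K w'_i)]` with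
`𝔻(z) = 1` if `z > 0` and `0` otherwise. -/
noncomputable def Hker (K : ℕ) (v : ℝ≥0) (n : ℕ) : ℝ :=
  ∫ p, (if 0 < ∑ i : Fin K, p.1 i then (1 : ℝ) else 0) *
    (if 0 < mixSum n p then (1 : ℝ) else 0) ∂(gaussPair K v)

instance (K : ℕ) (v : ℝ≥0) : IsProbabilityMeasure (gaussPair K v) := by
  unfold gaussPair; infer_instance

lemma measurePreserving_eval_pi {ι : Type*} [Fintype ι] {α : ι → Type*}
    [∀ i, MeasurableSpace (α i)] (μ : ∀ i, Measure (α i)) [∀ i, IsProbabilityMeasure (μ i)]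
    (i : ι) : MeasurePreserving (Function.eval i) (Measure.pi μ) (μ i) := by
  classical
  refine ⟨measurable_pi_apply i, ?_⟩
  ext s hs
  rw [Measure.map_apply (measurable_pi_apply i) hs]
  have h : Function.eval i ⁻¹' s =
      Set.pi Set.univ (Function.update (fun j => (Set.univ : Set (α j))) i s) := by
    ext f
    simp only [Set.mem_preimage, Set.mem_pi, Set.mem_univ, forall_true_left]
    constructor
    · intro hf j
      rcases eq_or_ne j i with rfl | hj
      · simpa using hf
      · simp [Function.update_of_ne hj]
    · intro hf
      simpa using hf i
  rw [h, Measure.pi_pi]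
  rw [Fintype.prod_eq_single i ?_]
  · simp
  · intro j hj
    simp [Function.update_of_ne hj]

lemma memℒp_two_id_gaussian (v : ℝ≥0) : MemLp (fun x : ℝ => x) 2 (gaussianReal 0 v) := by
  rw [memLp_two_iff_integrable_sq measurable_id'.aestronglyMeasurable]
  by_cases hv : v = 0
  · simp only [hv, gaussianReal_zero_var]
    have hm : Measurable (fun x : ℝ => x ^ 2) := by measurability
    exact (integrable_const ((0:ℝ) ^ 2)).congr (ae_eq_dirac' hm).symm
  · rw [gaussianReal_of_var_ne_zero _ hv,
      integrable_withDensity_iff (measurable_gaussianPDF _ _)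
        (ae_of_all _ fun x => ENNReal.ofReal_lt_top)]
    have hvpos : (0 : ℝ) < v := NNReal.coe_pos.mpr (pos_iff_ne_zero.mpr hv)
    have hb : (0:ℝ) < (2 * (v:ℝ))⁻¹ := by positivity
    have heq : (fun x : ℝ => x ^ 2 * (gaussianPDF 0 v x).toReal)
        = fun x => (√(2 * π * v))⁻¹ * (x ^ (2:ℝ) * rexp (-(2 * (v:ℝ))⁻¹ * x ^ 2)) := by
      funext x
      rw [gaussianPDF, ENNReal.toReal_ofReal (gaussianPDFReal_nonneg _ _ _), gaussianPDFReal]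
      have h1 : x ^ (2:ℝ) = x ^ 2 := by
        rw [show (2:ℝ) = ((2:ℕ):ℝ) by norm_num, Real.rpow_natCast]
      have h2 : -(x - 0) ^ 2 / (2 * (v:ℝ)) = -(2 * (v:ℝ))⁻¹ * x ^ 2 := by ring
      rw [h1, h2]; ring
    rw [heq]
    exact (integrable_rpow_mul_exp_neg_mul_sq hb (by norm_num : (-1:ℝ) < 2)).const_mul _

section Coords

variable {K : ℕ} {v : ℝ≥0}

lemma measurePreserving_fst_gaussPair (K : ℕ) (v : ℝ≥0) :
    MeasurePreserving Prod.fst (gaussPair K v)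
      (Measure.pi fun _ : Fin K => gaussianReal 0 v) :=
  ⟨measurable_fst, by simp [gaussPair, Measure.map_fst_prod]⟩

lemma measurePreserving_snd_gaussPair (K : ℕ) (v : ℝ≥0) :
    MeasurePreserving Prod.snd (gaussPair K v)
      (Measure.pi fun _ : Fin K => gaussianReal 0 v) :=
  ⟨measurable_snd, by simp [gaussPair, Measure.map_snd_prod]⟩

lemma memℒp_coord_fst (i : Fin K) :
    MemLp (fun p : (Fin K → ℝ) × (Fin K → ℝ) => p.1 i) 2 (gaussPair K v) :=
  (memℒp_two_id_gaussian v).comp_measurePreserving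
    ((measurePreserving_eval_pi (fun _ : Fin K => gaussianReal 0 v) i).comp
      (measurePreserving_fst_gaussPair K v))

lemma memℒp_coord_snd (i : Fin K) :
    MemLp (fun p : (Fin K → ℝ) × (Fin K → ℝ) => p.2 i) 2 (gaussPair K v) :=
  (memℒp_two_id_gaussian v).comp_measurePreserving
    ((measurePreserving_eval_pi (fun _ : Fin K => gaussianReal 0 v) i).comp
      (measurePreserving_snd_gaussPair K v))

lemma memℒp_sum_fst : MemLp (fun p : (Fin K → ℝ) × (Fin K → ℝ) => ∑ i, p.1 i) 2
    (gaussPair K v) :=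
  memLp_finset_sum univ (fun i _ => memℒp_coord_fst i)

lemma memℒp_mixSum (m : ℕ) :
    MemLp (fun p : (Fin K → ℝ) × (Fin K → ℝ) => mixSum m p) 2 (gaussPair K v) := by
  unfold mixSum
  refine memLp_finset_sum univ (fun i _ => ?_)
  by_cases h : (i : ℕ) < m
  · simp only [h, if_true]
    exact memℒp_coord_fst i
  · simp only [h, if_false]
    exact memℒp_coord_snd i

lemma measurable_sum_fst :
    Measurable (fun p : (Fin K → ℝ) × (Fin K → ℝ) => ∑ i, p.1 i) :=
  Finset.measurable_sum univ fun i _ => (measurable_pi_apply i).comp measurable_fst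

lemma measurable_mixSum (m : ℕ) :
    Measurable (fun p : (Fin K → ℝ) × (Fin K → ℝ) => mixSum m p) := by
  unfold mixSum
  refine Finset.measurable_sum univ fun i _ => ?_
  by_cases h : (i : ℕ) < m
  · simp only [h, if_true]
    exact (measurable_pi_apply i).comp measurable_fst
  · simp only [h, if_false]
    exact (measurable_pi_apply i).comp measurable_snd

end Coords

lemma integrable_mul_of_memL2 {α : Type*} {m : MeasurableSpace α} {μ : Measure α}
    {f g : α → ℝ} (hf : MemLp f 2 μ) (hg : MemLp g 2 μ) :
    Integrable (fun x => f x * g x) μ := by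
  have h1 := hf.integrable_sq
  have h2 := hg.integrable_sq
  refine Integrable.mono' (((h1.add h2)).div_const 2) (hf.1.mul hg.1)
    (ae_of_all _ fun x => ?_)
  simp only [Pi.add_apply]
  rw [Real.norm_eq_abs, abs_mul]
  nlinarith [sq_nonneg (|f x| - |g x|), sq_abs (f x), sq_abs (g x),
    abs_nonneg (f x), abs_nonneg (g x)]

lemma integrable_relu_prod {K : ℕ} {v : ℝ≥0} (m : ℕ) :
    Integrable (fun p : (Fin K → ℝ) × (Fin K → ℝ) =>
      max (∑ i, p.1 i) 0 * max (mixSum m p) 0) (gaussPair K v) := by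
  have habs : ∀ z : ℝ, ‖max z 0‖ ≤ ‖z‖ := by
    intro z
    rw [Real.norm_eq_abs, Real.norm_eq_abs, abs_of_nonneg (le_max_right z 0)]
    exact max_le (le_abs_self z) (abs_nonneg z)
  have h1 : MemLp (fun p : (Fin K → ℝ) × (Fin K → ℝ) => max (∑ i, p.1 i) 0) 2
      (gaussPair K v) :=
    MemLp.of_le memℒp_sum_fst
      ((measurable_sum_fst.max measurable_const).aestronglyMeasurable)
      (ae_of_all _ fun p => habs _)
  have h2 : MemLp (fun p : (Fin K → ℝ) × (Fin K → ℝ) => max (mixSum m p) 0) 2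
      (gaussPair K v) :=
    MemLp.of_le (memℒp_mixSum m)
      (((measurable_mixSum m).max measurable_const).aestronglyMeasurable)
      (ae_of_all _ fun p => habs _)
  exact integrable_mul_of_memL2 h1 h2

lemma integrable_ind_prod {K : ℕ} {v : ℝ≥0} (m : ℕ) :
    Integrable (fun p : (Fin K → ℝ) × (Fin K → ℝ) =>
      (if 0 < ∑ i, p.1 i then (1:ℝ) else 0) * (if 0 < mixSum m p then (1:ℝ) else 0))
      (gaussPair K v) := by
  have hm : Measurable (fun p : (Fin K → ℝ) × (Fin K → ℝ) =>
      (if 0 < ∑ i, p.1 i then (1:ℝ) else 0) * (if 0 < mixSum m p then (1:ℝ) else 0)) := by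
    exact (Measurable.ite (measurableSet_lt measurable_const measurable_sum_fst)
        measurable_const measurable_const).mul
      (Measurable.ite (measurableSet_lt measurable_const (measurable_mixSum m))
        measurable_const measurable_const)
  refine Integrable.mono' (integrable_const (1:ℝ)) hm.aestronglyMeasurable
    (ae_of_all _ fun p => ?_)
  rw [Real.norm_eq_abs]
  split_ifs <;> norm_num

noncomputable def swapAt {K : ℕ} (j : Fin K) :
    ((Fin K → ℝ) × (Fin K → ℝ)) ≃ᵐ ((Fin K → ℝ) × (Fin K → ℝ)) :=
  (MeasurableEquiv.arrowProdEquivProdArrow ℝ ℝ (Fin K)).symm.trans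
    ((MeasurableEquiv.piCongrRight (fun i : Fin K =>
        if i = j then (MeasurableEquiv.prodComm : (ℝ × ℝ) ≃ᵐ (ℝ × ℝ)) else MeasurableEquiv.refl (ℝ × ℝ))).trans
      (MeasurableEquiv.arrowProdEquivProdArrow ℝ ℝ (Fin K)))

lemma swapAt_apply {K : ℕ} (j : Fin K) (p : (Fin K → ℝ) × (Fin K → ℝ)) :
    swapAt j p = (fun i => if i = j then p.2 j else p.1 i,
                  fun i => if i = j then p.1 j else p.2 i) := by
  simp only [swapAt, MeasurableEquiv.trans_apply]
  apply Prod.ext <;> funext i <;>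
  · by_cases h : i = j <;>
      simp [MeasurableEquiv.arrowProdEquivProdArrow, MeasurableEquiv.piCongrRight,
        Equiv.arrowProdEquivProdArrow, Equiv.piCongrRight, h, MeasurableEquiv.prodComm, Equiv.prodComm]

lemma measurePreserving_swapAt {K : ℕ} {v : ℝ≥0} (j : Fin K) :
    MeasurePreserving (swapAt j) (gaussPair K v) (gaussPair K v) := by
  classical
  set γ := gaussianReal 0 v
  have hA := measurePreserving_arrowProdEquivProdArrow ℝ ℝ (Fin K)
      (fun _ => γ) (fun _ => γ)
  have hpi : MeasurePreserving
      (⇑(MeasurableEquiv.piCongrRight (fun i : Fin K =>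
        if i = j then (MeasurableEquiv.prodComm : (ℝ × ℝ) ≃ᵐ (ℝ × ℝ)) else MeasurableEquiv.refl (ℝ × ℝ))))
      (Measure.pi fun _ : Fin K => γ.prod γ) (Measure.pi fun _ : Fin K => γ.prod γ) := by
    refine measurePreserving_pi _ _ (fun i => ?_)
    by_cases h : i = j
    · simp only [if_pos h]
      exact (Measure.measurePreserving_swap (μ := γ) (ν := γ))
    · simpa [h] using MeasurePreserving.id (γ.prod γ)
  have hAsymm : MeasurePreserving
      (⇑(MeasurableEquiv.arrowProdEquivProdArrow ℝ ℝ (Fin K)).symm)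
      (gaussPair K v) (Measure.pi fun _ : Fin K => γ.prod γ) :=
    MeasurePreserving.symm _ hA
  have : MeasurePreserving (swapAt (K := K) j) (gaussPair K v) (gaussPair K v) := by
    have hcomp := (hA.comp hpi).comp hAsymm
    simpa [swapAt, MeasurableEquiv.coe_trans, Function.comp_assoc, gaussPair] using hcomp
  exact this

lemma mul_nonneg_of_nonpos_nonpos' {a b : ℝ} (ha : a ≤ 0) (hb : b ≤ 0) : 0 ≤ a * b := by
  nlinarith

lemma step_le {K : ℕ} {v : ℝ≥0} {n : ℕ} (hn : n < K) (ψ : ℝ → ℝ) (hmono : Monotone ψ)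
    (hint : ∀ m : ℕ, Integrable
      (fun p : (Fin K → ℝ) × (Fin K → ℝ) => ψ (∑ i, p.1 i) * ψ (mixSum m p)) (gaussPair K v)) :
    ∫ p, ψ (∑ i, p.1 i) * ψ (mixSum n p) ∂(gaussPair K v)
      ≤ ∫ p, ψ (∑ i, p.1 i) * ψ (mixSum (n + 1) p) ∂(gaussPair K v) := by
  classical
  set μ := gaussPair K v with hμ
  set j : Fin K := ⟨n, hn⟩ with hj
  set T := swapAt (K := K) j with hTdef
  have hT : MeasurePreserving (⇑T) μ μ := measurePreserving_swapAt j
  set a : (Fin K → ℝ) × (Fin K → ℝ) → ℝ := fun p => ∑ i ∈ univ.erase j, p.1 i with ha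
  set b : (Fin K → ℝ) × (Fin K → ℝ) → ℝ :=
    fun p => ∑ i ∈ univ.erase j, (if (i : ℕ) < n then p.1 i else p.2 i) with hb
  have hne : ∀ i : Fin K, i ∈ univ.erase j → (i : ℕ) ≠ n := by
    intro i hi hin
    exact (Finset.mem_erase.mp hi).1 (Fin.ext hin)
  have hsum : ∀ p : (Fin K → ℝ) × (Fin K → ℝ), ∑ i, p.1 i = p.1 j + a p :=
    fun p => (Finset.add_sum_erase _ _ (mem_univ j)).symm
  have hmixn : ∀ p : (Fin K → ℝ) × (Fin K → ℝ), mixSum n p = p.2 j + b p := by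
    intro p
    rw [mixSum, ← Finset.add_sum_erase _ _ (mem_univ j)]
    have : ¬ ((j : ℕ) < n) := by simp [hj]
    rw [if_neg this]
  have hmixn1 : ∀ p : (Fin K → ℝ) × (Fin K → ℝ), mixSum (n + 1) p = p.1 j + b p := by
    intro p
    rw [mixSum, ← Finset.add_sum_erase _ _ (mem_univ j)]
    have h1 : ((j : ℕ) < n + 1) := by simp [hj]
    rw [if_pos h1]
    congr 1
    refine Finset.sum_congr rfl fun i hi => ?_
    have h2 : ((i : ℕ) < n + 1) ↔ ((i : ℕ) < n) := by
      have := hne i hi; omega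
    simp only [h2]
  -- action of T
  have hT1j : ∀ p : (Fin K → ℝ) × (Fin K → ℝ), (T p).1 j = p.2 j := by
    intro p; rw [hTdef, swapAt_apply]; simp
  have hT2j : ∀ p : (Fin K → ℝ) × (Fin K → ℝ), (T p).2 j = p.1 j := by
    intro p; rw [hTdef, swapAt_apply]; simp
  have haT : ∀ p : (Fin K → ℝ) × (Fin K → ℝ), a (T p) = a p := by
    intro p
    rw [ha]
    refine Finset.sum_congr rfl fun i hi => ?_
    have h := (Finset.mem_erase.mp hi).1
    rw [hTdef, swapAt_apply]
    simp [h]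
  have hbT : ∀ p : (Fin K → ℝ) × (Fin K → ℝ), b (T p) = b p := by
    intro p
    rw [hb]
    refine Finset.sum_congr rfl fun i hi => ?_
    have h := (Finset.mem_erase.mp hi).1
    rw [hTdef, swapAt_apply]
    simp [h]
  set G : (Fin K → ℝ) × (Fin K → ℝ) → ℝ :=
    fun p => ψ (∑ i, p.1 i) * ψ (mixSum (n + 1) p) - ψ (∑ i, p.1 i) * ψ (mixSum n p) with hG
  have hGint : Integrable G μ := (hint (n + 1)).sub (hint n)
  have hGTint : Integrable (fun p => G (T p)) μ :=
    (hT.integrable_comp_emb T.measurableEmbedding).mpr hGint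
  have hGT : ∫ p, G (T p) ∂μ = ∫ p, G p ∂μ := hT.integral_comp T.measurableEmbedding G
  have hkey : ∀ p : (Fin K → ℝ) × (Fin K → ℝ), 0 ≤ G p + G (T p) := by
    intro p
    have e1 : G p = ψ (p.1 j + a p) * (ψ (p.1 j + b p) - ψ (p.2 j + b p)) := by
      rw [hG]
      simp only [hsum p, hmixn p, hmixn1 p]
      ring
    have e2 : G (T p) = ψ (p.2 j + a p) * (ψ (p.2 j + b p) - ψ (p.1 j + b p)) := by
      rw [hG]
      simp only [hsum (T p), hmixn (T p), hmixn1 (T p), hT1j p, hT2j p, haT p, hbT p]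
      ring
    have e3 : G p + G (T p) =
        (ψ (p.1 j + a p) - ψ (p.2 j + a p)) * (ψ (p.1 j + b p) - ψ (p.2 j + b p)) := by
      rw [e1, e2]; ring
    rw [e3]
    rcases le_total (p.1 j) (p.2 j) with h | h
    · exact mul_nonneg_of_nonpos_nonpos'
        (sub_nonpos.2 (hmono (by linarith))) (sub_nonpos.2 (hmono (by linarith)))
    · exact mul_nonneg
        (sub_nonneg.2 (hmono (by linarith))) (sub_nonneg.2 (hmono (by linarith)))
  have h2 : (0:ℝ) ≤ ∫ p, (G p + G (T p)) ∂μ := integral_nonneg hkey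
  rw [integral_add hGint hGTint, hGT] at h2
  have h3 : (0:ℝ) ≤ ∫ p, G p ∂μ := by linarith
  rw [hG, integral_sub (hint (n + 1)) (hint n)] at h3
  linarith

lemma mono_le {K : ℕ} {v : ℝ≥0} (ψ : ℝ → ℝ) (hmono : Monotone ψ)
    (hint : ∀ m : ℕ, Integrable
      (fun p : (Fin K → ℝ) × (Fin K → ℝ) => ψ (∑ i, p.1 i) * ψ (mixSum m p)) (gaussPair K v)) :
    ∀ n n' : ℕ, n ≤ n' → n' ≤ K →
      ∫ p, ψ (∑ i, p.1 i) * ψ (mixSum n p) ∂(gaussPair K v)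
        ≤ ∫ p, ψ (∑ i, p.1 i) * ψ (mixSum n' p) ∂(gaussPair K v) := by
  intro n n' h h'
  induction n' with
  | zero =>
    have : n = 0 := Nat.le_zero.mp h
    subst this; exact le_rfl
  | succ k ih =>
    have hkK : k < K := Nat.lt_of_succ_le h'
    rcases Nat.eq_or_lt_of_le h with rfl | hlt
    · exact le_rfl
    · exact le_trans (ih (Nat.lt_succ_iff.mp hlt) hkK.le) (step_le hkK ψ hmono hint)

theorem stmt_8 (K : ℕ) (hK : 1 ≤ K) (σ : ℝ) (hσ : 0 < σ) :
    ∀ n n' : ℕ, n ≤ n' → n' ≤ K →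
      Fker K (σ ^ 2).toNNReal n ≤ Fker K (σ ^ 2).toNNReal n' ∧
      Hker K (σ ^ 2).toNNReal n ≤ Hker K (σ ^ 2).toNNReal n' := by
  intro n n' h h'
  set v := (σ ^ 2).toNNReal
  have hφ : Monotone (fun z : ℝ => max z 0) := fun x y hxy => max_le_max hxy le_rfl
  have hD : Monotone (fun z : ℝ => if 0 < z then (1:ℝ) else 0) := by
    intro x y hxy
    by_cases hx : 0 < x
    · simp [hx, lt_of_lt_of_le hx hxy]
    · by_cases hy : 0 < y <;> simp [hx, hy]
  constructor
  · exact mono_le (K := K) (v := v) (fun z => max z 0) hφ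
      (fun m => integrable_relu_prod m) n n' h h'
  · exact mono_le (K := K) (v := v) (fun z => if 0 < z then (1:ℝ) else 0) hD
      (fun m => integrable_ind_prod m) n n' h h'
end

section
/- Let D be a finite training set of m labeled instances (x, y) with y ∈ {−1, +1} and let ρ > 0. Suppose a differentiable function s^{ab} : ℝ → ℝ and trajectories s^{(x)} : ℝ → ℝ satisfy, for all t, d s^{ab}/dt (t) = (ρ/m) Σ_{(x,y) ∈ D} g(−y s^{(x)}(t)) · y · ω(e_a e_b, x), where ω(e_a e_b, x) = Σ_{j=1}^{l(x)−1} (e_jᵀ e_a)(e_{j+1}ᵀ e_b) ≥ 0. If the bigram e_a e_b occurs in no negative instance (ω(e_a e_b, x) = 0 whenever y = −1) and occurs in at least one positive instance (ω(e_a e_b, x) > 0 for some (x, +1) ∈ D), then d s^{ab}/dt (t) > 0 for all t; in particular s^{ab} is strictly increasing. -/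
/-!
STATEMENT 14: Under the infinite-width NTK gradient-flow equation of the matrix-vector
(MV) model with logistic loss, a bigram occurring in no negative instance and in at
least one positive instance has a strictly increasing label score.

Tokens are elements of `Fin V`, identified with one-hot vectors. Instance `i` has
length `L i` and tokens `X i 0, …, X i (L i − 1)` (0-indexed), and label
`y i ∈ {−1,+1}`; `g` is the sigmoid function.
-/

open Real Finset

/-- Dot product of the one-hot vectors of two tokens. -/
noncomputable def tdot {V : ℕ} (a b : Fin V) : ℝ := if a = b then 1 else 0

/-- The sigmoid function `g(z) = 1/(1+e^{-z})`. -/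
noncomputable def sigmoid (z : ℝ) : ℝ := 1 / (1 + Real.exp (-z))

/-- `ω(e_a e_b, x) = Σ_{j=1}^{l−1} (e_jᵀ e_a)(e_{j+1}ᵀ e_b)`, the number of
occurrences of the bigram `e_a e_b` in an instance of length `l` with (0-indexed)
tokens `E : ℕ → Fin V`. -/
noncomputable def omegaBigram {V : ℕ} (l : ℕ) (E : ℕ → Fin V) (a b : Fin V) : ℝ :=
  ∑ j ∈ Finset.range (l - 1), tdot (E j) a * tdot (E (j + 1)) b

theorem stmt_14 {V m : ℕ} (hm : 0 < m)
    (L : Fin m → ℕ) (X : Fin m → ℕ → Fin V) (y : Fin m → ℝ)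
    (hy : ∀ i, y i = 1 ∨ y i = -1)
    (ρ : ℝ) (hρ : 0 < ρ)
    (a b : Fin V) (sab : ℝ → ℝ) (hsab : Differentiable ℝ sab) (sx : Fin m → ℝ → ℝ)
    (hode : ∀ t : ℝ, deriv sab t =
      (ρ / m) * ∑ i : Fin m, _root_.sigmoid (-(y i) * sx i t) * y i *
        omegaBigram (L i) (X i) a b)
    (hneg : ∀ i, y i = -1 → omegaBigram (L i) (X i) a b = 0)
    (hpos : ∃ i, y i = 1 ∧ 0 < omegaBigram (L i) (X i) a b) :
    (∀ t : ℝ, 0 < deriv sab t) ∧ StrictMono sab := by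
  have hsig : ∀ z : ℝ, 0 < _root_.sigmoid z := by
    intro z
    have : 0 < 1 + Real.exp (-z) := by positivity
    simp [_root_.sigmoid]; positivity
  have hderiv : ∀ t, 0 < deriv sab t := by
    intro t
    rw [hode t]
    apply mul_pos (by positivity)
    obtain ⟨i0, hi0y, hi0pos⟩ := hpos
    have hterm : ∀ i ∈ Finset.univ, (0:ℝ) ≤ _root_.sigmoid (-(y i) * sx i t) * y i *
        omegaBigram (L i) (X i) a b := by
      intro i _
      rcases hy i with h1 | h1
      · have homega : 0 ≤ omegaBigram (L i) (X i) a b := by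
          unfold omegaBigram tdot
          apply Finset.sum_nonneg
          intro j _
          split <;> split <;> norm_num
        have := hsig (-(y i) * sx i t)
        rw [h1] at this ⊢
        nlinarith
      · rw [hneg i h1]; simp
    apply Finset.sum_pos' hterm
    refine ⟨i0, Finset.mem_univ _, ?_⟩
    have := hsig (-(y i0) * sx i0 t)
    rw [hi0y] at this ⊢
    nlinarith
  exact ⟨hderiv, strictMono_of_deriv_pos hderiv⟩
end
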